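/- (Doeblin condition for the continuous-state Moran kernel.) Assume ℙ(Y_0 = 0) > 0. Let κ be the Markov kernel on [0, C_1 − c_0] defined by κ(z, A) = ℙ(min(max(z + Y_0 − c_0, 0), C_1 − c_0) ∈ A) for Borel sets A ⊆ [0, C_1 − c_0], and let k be the smallest positive integer with k·c_0 ≥ C_1 − c_0. Then for every z ∈ [0, C_1 − c_0] and every Borel set A ⊆ [0, C_1 − c_0], the (k+1)-step kernel satisfies κ^{k+1}(z, A) ≥ (ℙ(Y_0 = 0))^k · κ(0, A). In particular, κ satisfies the Doeblin condition with n_0 = k+1, δ = ℙ(Y_0 = 0)^k, and minorizing probability measure ν = κ(0, ·). -/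

import Mathlib

open scoped BigOperators
open MeasureTheory ProbabilityTheory Filter

/-- `m`-fold composition of a transition kernel `κ` on `ℝ`, started at `z`:
`iterKernel κ 0 z = δ_z` and `iterKernel κ (m+1) z = (iterKernel κ m z).bind κ`. -/
noncomputable def iterKernel (κ : ℝ → Measure ℝ) : ℕ → ℝ → Measure ℝ
  | 0 => fun z => Measure.dirac z
  | m + 1 => fun z => (iterKernel κ m z).bind κ

/-- Doeblin condition for the continuous-state Moran kernel: if
`ℙ(Y₀ = 0) > 0` and `k` is the smallest positive integer with `k·c₀ ≥ C₁ − c₀`, then the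
`(k+1)`-step kernel satisfies `κ^{k+1}(z, A) ≥ ℙ(Y₀ = 0)^k · κ(0, A)` for every
`z ∈ [0, C₁ − c₀]` and every Borel `A ⊆ [0, C₁ − c₀]`; moreover `κ(0, ·)` is a probability
measure, so `κ` satisfies the Doeblin condition with `n₀ = k+1`, `δ = ℙ(Y₀ = 0)^k` and
minorizing measure `ν = κ(0, ·)`. -/
theorem stmt16 (c0 C1 : ℝ) (hc0 : 0 < c0) (hcC : c0 < C1)
    {Ω : Type} [MeasurableSpace Ω] (μ : Measure Ω) [IsProbabilityMeasure μ]
    (Y0 : Ω → ℝ) (hY0meas : Measurable Y0) (hY0nn : ∀ ω, 0 ≤ Y0 ω)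
    (hatom : 0 < μ {ω | Y0 ω = 0})
    (κ : ℝ → Measure ℝ)
    (hκ : ∀ z, κ z = Measure.map (fun ω => min (max (z + Y0 ω - c0) 0) (C1 - c0)) μ)
    (k : ℕ) (hk1 : 1 ≤ k) (hk2 : C1 - c0 ≤ k * c0)
    (hkmin : ∀ m : ℕ, 1 ≤ m → C1 - c0 ≤ m * c0 → k ≤ m) :
    (∀ z ∈ Set.Icc (0 : ℝ) (C1 - c0), ∀ A : Set ℝ, MeasurableSet A →
      A ⊆ Set.Icc (0 : ℝ) (C1 - c0) →
        (μ {ω | Y0 ω = 0}) ^ k * κ 0 A ≤ iterKernel κ (k + 1) z A) ∧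
    IsProbabilityMeasure (κ 0) := by

  classical
  set p := μ {ω | Y0 ω = 0} with hp
  set g : ℝ → ℝ := fun z => min (max (z - c0) 0) (C1 - c0) with hg
  have hFmeas : ∀ z : ℝ, Measurable (fun ω => min (max (z + Y0 ω - c0) 0) (C1 - c0)) := fun z =>
    (((measurable_const.add hY0meas).sub measurable_const).max measurable_const).min
      measurable_const
  have hκA : ∀ (z : ℝ) (A : Set ℝ), MeasurableSet A →
      κ z A = μ ((fun ω => min (max (z + Y0 ω - c0) 0) (C1 - c0)) ⁻¹' A) := by
    intro z A hA
    rw [hκ, Measure.map_apply (hFmeas z) hA]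
  have hκmeas : Measurable κ := by
    apply Measure.measurable_of_measurable_coe
    intro A hA
    have hset : MeasurableSet ((fun q : ℝ × Ω =>
        min (max (q.1 + Y0 q.2 - c0) 0) (C1 - c0)) ⁻¹' A) :=
      ((((measurable_fst.add (hY0meas.comp measurable_snd)).sub measurable_const).max
        measurable_const).min measurable_const) hA
    have : (fun z => κ z A) = fun z => μ (Prod.mk z ⁻¹'
        ((fun q : ℝ × Ω => min (max (q.1 + Y0 q.2 - c0) 0) (C1 - c0)) ⁻¹' A)) := by
      funext z
      rw [hκA z A hA]
      rfl
    rw [this]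
    exact measurable_measure_prodMk_left hset
  have hprob : ∀ z, IsProbabilityMeasure (κ z) := by
    intro z
    rw [hκ]
    exact Measure.isProbabilityMeasure_map (hFmeas z).aemeasurable
  -- one-step minorization with dirac at g z
  have hstep : ∀ z : ℝ, p • Measure.dirac (g z) ≤ κ z := by
    intro z
    rw [Measure.le_iff]
    intro A hA
    rw [Measure.smul_apply, smul_eq_mul, Measure.dirac_apply' _ hA]
    by_cases hgz : g z ∈ A
    · rw [Set.indicator_of_mem hgz, Pi.one_apply, mul_one]
      rw [hκA z A hA]
      apply measure_mono
      intro ω hω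
      simp only [Set.mem_setOf_eq] at hω
      have : z + Y0 ω - c0 = z - c0 := by rw [hω]; ring
      simpa [Set.mem_preimage, this] using hgz
    · rw [Set.indicator_of_notMem hgz, mul_zero]
      exact zero_le
  -- iterated minorization
  have hiter : ∀ (m : ℕ) (z : ℝ), p ^ m • Measure.dirac (g^[m] z) ≤ iterKernel κ m z := by
    intro m
    induction m with
    | zero => intro z; simp [iterKernel]
    | succ m ih =>
      intro z
      show p ^ (m + 1) • Measure.dirac (g^[m + 1] z) ≤ (iterKernel κ m z).bind κ
      rw [Measure.le_iff]
      intro A hA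
      rw [Measure.bind_apply hA hκmeas.aemeasurable]
      have hmeasint : Measurable fun x => κ x A := (Measure.measurable_coe hA).comp hκmeas
      calc (p ^ (m + 1) • Measure.dirac (g^[m + 1] z)) A
          = p ^ m * ((p • Measure.dirac (g (g^[m] z))) A) := by
            rw [Function.iterate_succ_apply', Measure.smul_apply, Measure.smul_apply,
              smul_eq_mul, smul_eq_mul, pow_succ, mul_assoc]
        _ ≤ p ^ m * κ (g^[m] z) A := by
            exact mul_le_mul_right (Measure.le_iff'.mp (hstep (g^[m] z)) A) _
        _ = ∫⁻ x, κ x A ∂(p ^ m • Measure.dirac (g^[m] z)) := by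
            rw [lintegral_smul_measure, lintegral_dirac' _ hmeasint, smul_eq_mul]
        _ ≤ ∫⁻ x, κ x A ∂(iterKernel κ m z) := lintegral_mono' (ih z) le_rfl
  -- explicit formula for iterates of g on [0, C1 - c0]
  have hgform : ∀ (z : ℝ), 0 ≤ z → z ≤ C1 - c0 → ∀ m : ℕ, g^[m] z = max (z - m * c0) 0 := by
    intro z hz0 hz1 m
    induction m with
    | zero => simp [max_eq_left hz0]
    | succ m ih =>
      rw [Function.iterate_succ_apply', ih]
      have h1 : max (max (z - m * c0) 0 - c0) 0 ≤ C1 - c0 := by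
        rcases le_total (z - m * c0) 0 with h | h
        · rw [max_eq_right h]
          rcases le_total (0 - c0) (0:ℝ) with h' | h'
          · rw [max_eq_right h']; linarith
          · linarith
        · rw [max_eq_left h]
          rcases le_total (z - m * c0 - c0) (0:ℝ) with h' | h'
          · rw [max_eq_right h']; linarith
          · rw [max_eq_left h']; push_cast; nlinarith [hc0.le, Nat.cast_nonneg (α := ℝ) m]
      rw [show g (max (z - ↑m * c0) 0) = min (max (max (z - ↑m * c0) 0 - c0) 0) (C1 - c0) from rfl,
        min_eq_left h1]
      rcases le_total (z - m * c0) 0 with h | h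
      · rw [max_eq_right h]
        have : z - (↑(m + 1)) * c0 ≤ 0 := by push_cast; linarith
        rw [max_eq_right this]
        simp [max_eq_right, hc0.le]
      · rw [max_eq_left h]
        congr 1
        push_cast
        ring
  constructor
  · intro z hz A hA hAsub
    have h0 : g^[k] z = 0 := by
      rw [hgform z hz.1 hz.2 k]
      have : z - (k : ℝ) * c0 ≤ 0 := by
        have := hz.2
        linarith
      rw [max_eq_right this]
    have hmeasint : Measurable fun x => κ x A := (Measure.measurable_coe hA).comp hκmeas
    have hb : iterKernel κ (k + 1) z A = ∫⁻ x, κ x A ∂(iterKernel κ k z) := by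
      show ((iterKernel κ k z).bind κ) A = _
      rw [Measure.bind_apply hA hκmeas.aemeasurable]
    rw [hb]
    calc p ^ k * κ 0 A
        = ∫⁻ x, κ x A ∂(p ^ k • Measure.dirac (0 : ℝ)) := by
          rw [lintegral_smul_measure, lintegral_dirac' _ hmeasint, smul_eq_mul]
      _ ≤ ∫⁻ x, κ x A ∂(iterKernel κ k z) := by
          refine lintegral_mono' ?_ le_rfl
          rw [← h0]
          exact hiter k z
  · exact hprob 0
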